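/- Let f : E → ℝ be continuously differentiable with bounded derivative. Then for every t > 0 and all x, h ∈ E, |T_t f(x + h) − T_t f(x)| ≤ ‖h‖ · exp( ‖h‖² / (4t) ) · ( T_t ‖∇f‖(x + h) + T_t ‖∇f‖(x) ), where T_t ‖∇f‖ denotes the Mehler semigroup applied to the function y ↦ ‖∇f(y)‖. -/

import Mathlib

open MeasureTheory Real
open scoped ENNReal NNReal

/-- The standard Gaussian measure on the finite-dimensional inner product space
`EuclideanSpace ℝ (Fin n)`. -/
noncomputable def stdGaussian (n : ℕ) : Measure (EuclideanSpace ℝ (Fin n)) :=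
  MeasureTheory.volume.withDensity fun x =>
    ENNReal.ofReal ((2 * Real.pi) ^ (-(n : ℝ) / 2) * Real.exp (-‖x‖ ^ 2 / 2))

/-- The Ornstein–Uhlenbeck (Mehler) semigroup applied to a real-valued function:
`T_t f (x) = ∫ f(e^{−t} x + √(1 − e^{−2t}) y) dγ(y)`. -/
noncomputable def mehler (n : ℕ) (t : ℝ) (f : EuclideanSpace ℝ (Fin n) → ℝ)
    (x : EuclideanSpace ℝ (Fin n)) : ℝ :=
  ∫ y, f (Real.exp (-t) • x + Real.sqrt (1 - Real.exp (-2 * t)) • y) ∂(stdGaussian n)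

namespace Stmt6Aux

noncomputable def dens (n : ℕ) (y : EuclideanSpace ℝ (Fin n)) : ℝ :=
  (2 * Real.pi) ^ (-(n : ℝ) / 2) * Real.exp (-‖y‖ ^ 2 / 2)

lemma dens_pos {n : ℕ} (y : EuclideanSpace ℝ (Fin n)) : 0 < dens n y :=
  mul_pos (Real.rpow_pos_of_pos (by positivity) _) (Real.exp_pos _)

lemma dens_continuous (n : ℕ) : Continuous (dens n) := by
  unfold dens; fun_prop

lemma gauss_integrable (n : ℕ) (b : ℝ) (hb : 0 < b) :
    Integrable (fun v : EuclideanSpace ℝ (Fin n) => Real.exp (-b * ‖v‖ ^ 2)) := by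
  have := (GaussianFourier.integrable_cexp_neg_mul_sq_norm_add (b := (b:ℂ))
    (by simpa using hb) 0 (0 : EuclideanSpace ℝ (Fin n))).norm
  simp only [Complex.norm_exp] at this
  convert this using 2 with v
  have h2 : ((-(b:ℂ) * (‖v‖:ℂ) ^ 2 + 0 * ((inner ℝ (0 : EuclideanSpace ℝ (Fin n)) v : ℝ) : ℂ)))
      = ((-b * ‖v‖ ^ 2 : ℝ) : ℂ) := by push_cast; ring
  rw [h2, Complex.ofReal_re]

lemma dens_integrable (n : ℕ) : Integrable (dens n) := by
  have h : Integrable (fun y : EuclideanSpace ℝ (Fin n) => Real.exp (-(1/2 : ℝ) * ‖y‖ ^ 2)) :=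
    gauss_integrable n (1/2) (by norm_num)
  have hEq : dens n = fun y => (2 * Real.pi) ^ (-(n : ℝ) / 2)
      * Real.exp (-(1/2 : ℝ) * ‖y‖ ^ 2) := by
    funext y; unfold dens; congr 1; ring
  rw [hEq]
  exact h.const_mul _

lemma stdGaussian_integral {n : ℕ} (φ : EuclideanSpace ℝ (Fin n) → ℝ) :
    ∫ y, φ y ∂(stdGaussian n) = ∫ y, dens n y * φ y := by
  rw [stdGaussian]
  have hmeas : Measurable (fun y : EuclideanSpace ℝ (Fin n) => (dens n y).toNNReal) :=
    (measurable_real_toNNReal.comp (dens_continuous n).measurable)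
  have hEq : (fun x : EuclideanSpace ℝ (Fin n) =>
      ENNReal.ofReal ((2 * Real.pi) ^ (-(n : ℝ) / 2) * Real.exp (-‖x‖ ^ 2 / 2)))
      = fun x => ((dens n x).toNNReal : ℝ≥0∞) := by
    funext x; rfl
  rw [hEq, integral_withDensity_eq_integral_smul hmeas]
  congr 1 with y
  rw [NNReal.smul_def, smul_eq_mul, Real.coe_toNNReal _ (dens_pos y).le]

instance stdGaussian_finite (n : ℕ) : IsFiniteMeasure (stdGaussian n) := by
  constructor
  rw [stdGaussian, withDensity_apply _ MeasurableSet.univ, setLIntegral_univ]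
  exact (dens_integrable n).lintegral_lt_top

lemma scalar_ineq (u p q : ℝ) (hu0 : 0 ≤ u) (hu1 : u ≤ 1) (hq : 0 ≤ q) :
    Real.exp (u * p - u ^ 2 * q / 2) ≤ Real.exp (q / 2) * (Real.exp (p - q / 2) + 1) := by
  rcases le_or_gt 0 p with hp | hp
  · have h1 : Real.exp (u * p - u ^ 2 * q / 2) ≤ Real.exp p := by
      apply Real.exp_le_exp.mpr
      nlinarith
    have h2 : Real.exp p = Real.exp (q / 2) * Real.exp (p - q / 2) := by
      rw [← Real.exp_add]; ring_nf
    nlinarith [Real.exp_pos (q/2)]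
  · have h1 : Real.exp (u * p - u ^ 2 * q / 2) ≤ 1 := by
      rw [← Real.exp_zero]
      apply Real.exp_le_exp.mpr
      nlinarith
    have h2 : 1 ≤ Real.exp (q / 2) := Real.one_le_exp (by positivity)
    nlinarith [Real.exp_pos (p - q/2), Real.exp_pos (q/2)]

lemma dens_shift {n : ℕ} (z a : EuclideanSpace ℝ (Fin n)) (u : ℝ) :
    dens n (z - u • a)
      = dens n z * Real.exp (u * (inner ℝ z a : ℝ) - u ^ 2 * ‖a‖ ^ 2 / 2) := by
  have hn : ‖z - u • a‖ ^ 2 = ‖z‖ ^ 2 - 2 * (u * (inner ℝ z a : ℝ)) + u ^ 2 * ‖a‖ ^ 2 := by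
    rw [norm_sub_sq_real, real_inner_smul_right, norm_smul]
    simp [mul_pow, sq_abs]
  unfold dens
  rw [hn, show -(‖z‖ ^ 2 - 2 * (u * (inner ℝ z a : ℝ)) + u ^ 2 * ‖a‖ ^ 2) / 2
      = -‖z‖ ^ 2 / 2 + (u * (inner ℝ z a : ℝ) - u ^ 2 * ‖a‖ ^ 2 / 2) from by ring,
    Real.exp_add]
  ring

lemma dens_bound {n : ℕ} (z a : EuclideanSpace ℝ (Fin n)) (u : ℝ)
    (hu0 : 0 ≤ u) (hu1 : u ≤ 1) :
    dens n (z - u • a) ≤ Real.exp (‖a‖ ^ 2 / 2) * (dens n (z - a) + dens n z) := by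
  have h1 := dens_shift z a u
  have h2 := dens_shift z a 1
  simp only [one_smul, one_pow, one_mul] at h2
  rw [h1, h2]
  have key := scalar_ineq u (inner ℝ z a : ℝ) (‖a‖ ^ 2) hu0 hu1 (by positivity)
  have hz := (dens_pos z).le
  calc dens n z * Real.exp (u * (inner ℝ z a : ℝ) - u ^ 2 * ‖a‖ ^ 2 / 2)
      ≤ dens n z * (Real.exp (‖a‖ ^ 2 / 2) * (Real.exp ((inner ℝ z a : ℝ) - ‖a‖ ^ 2 / 2) + 1)) :=
        mul_le_mul_of_nonneg_left key hz
    _ = Real.exp (‖a‖ ^ 2 / 2)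
        * (dens n z * Real.exp ((inner ℝ z a : ℝ) - ‖a‖ ^ 2 / 2) + dens n z) := by ring

lemma integrable_dens_mul {n : ℕ} (w : EuclideanSpace ℝ (Fin n))
    (φ : EuclideanSpace ℝ (Fin n) → ℝ) (hc : Continuous φ) (c : ℝ) (hb : ∀ y, |φ y| ≤ c) :
    Integrable (fun z => dens n (z - w) * φ z) := by
  have hd : Integrable (fun z : EuclideanSpace ℝ (Fin n) => dens n (z - w)) :=
    (dens_integrable n).comp_sub_right w
  have := hd.bdd_mul hc.aestronglyMeasurable (Filter.Eventually.of_forall fun z => by simpa using hb z)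
  simpa [mul_comm] using this

lemma shift_integral_eq {n : ℕ} (φ : EuclideanSpace ℝ (Fin n) → ℝ)
    (w : EuclideanSpace ℝ (Fin n)) :
    ∫ y, φ (y + w) ∂(stdGaussian n) = ∫ z, dens n (z - w) * φ z := by
  rw [stdGaussian_integral]
  rw [← integral_sub_right_eq_self (fun y => dens n y * φ (y + w)) w]
  congr 1 with z
  simp

lemma shift_le {n : ℕ} (φ : EuclideanSpace ℝ (Fin n) → ℝ) (hc : Continuous φ)
    (h0 : ∀ y, 0 ≤ φ y) (c : ℝ) (hb : ∀ y, φ y ≤ c) (a : EuclideanSpace ℝ (Fin n))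
    (u : ℝ) (hu0 : 0 ≤ u) (hu1 : u ≤ 1) :
    ∫ y, φ (y + u • a) ∂(stdGaussian n)
      ≤ Real.exp (‖a‖ ^ 2 / 2)
        * ((∫ y, φ (y + a) ∂(stdGaussian n)) + ∫ y, φ y ∂(stdGaussian n)) := by
  have habs : ∀ y, |φ y| ≤ c := fun y => by
    rw [abs_of_nonneg (h0 y)]; exact hb y
  have hInt1 : Integrable (fun z => dens n (z - a) * φ z) := integrable_dens_mul a φ hc c habs
  have hInt0 : Integrable (fun z => dens n (z - 0) * φ z) := integrable_dens_mul 0 φ hc c habs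
  have hInt0' : Integrable (fun z : EuclideanSpace ℝ (Fin n) => dens n z * φ z) := by
    simpa using hInt0
  rw [shift_integral_eq, shift_integral_eq, stdGaussian_integral]
  have step : ∫ z, dens n (z - u • a) * φ z
      ≤ ∫ z, Real.exp (‖a‖ ^ 2 / 2) * ((dens n (z - a) + dens n z) * φ z) := by
    apply integral_mono_of_nonneg
    · filter_upwards with z
      exact mul_nonneg (dens_pos _).le (h0 z)
    · refine ((hInt1.add hInt0').const_mul (Real.exp (‖a‖ ^ 2 / 2))).congr ?_
      filter_upwards with z
      simp only [Pi.add_apply]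
      ring
    · filter_upwards with z
      calc dens n (z - u • a) * φ z
          ≤ (Real.exp (‖a‖ ^ 2 / 2) * (dens n (z - a) + dens n z)) * φ z :=
            mul_le_mul_of_nonneg_right (dens_bound z a u hu0 hu1) (h0 z)
        _ = Real.exp (‖a‖ ^ 2 / 2) * ((dens n (z - a) + dens n z) * φ z) := by ring
  refine step.trans_eq ?_
  simp_rw [← smul_eq_mul (a := Real.exp (‖a‖ ^ 2 / 2))]
  rw [integral_smul, smul_eq_mul]
  congr 1
  rw [show (fun z => (dens n (z - a) + dens n z) * φ z)
      = fun z => dens n (z - a) * φ z + dens n z * φ z from by funext z; ring]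
  exact integral_add hInt1 hInt0'

lemma norm_gradient_eq {n : ℕ} (f : EuclideanSpace ℝ (Fin n) → ℝ)
    (y : EuclideanSpace ℝ (Fin n)) : ‖gradient f y‖ = ‖fderiv ℝ f y‖ := by
  rw [gradient]
  exact LinearIsometryEquiv.norm_map _ _

lemma integrable_norm_gauss (n : ℕ) :
    Integrable (fun y : EuclideanSpace ℝ (Fin n) => ‖y‖) (stdGaussian n) := by
  rw [stdGaussian, integrable_withDensity_iff (by fun_prop)
    (by filter_upwards with y; exact ENNReal.ofReal_lt_top)]
  have hmain : Integrable (fun y : EuclideanSpace ℝ (Fin n) => ‖y‖ * dens n y) := by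
    apply Integrable.mono' ((gauss_integrable n (1/4) (by norm_num)).const_mul
      ((2 * Real.pi) ^ (-(n : ℝ) / 2) * Real.exp 1))
    · exact (continuous_norm.mul (dens_continuous n)).aestronglyMeasurable
    · filter_upwards with y
      rw [Real.norm_eq_abs, abs_of_nonneg (mul_nonneg (norm_nonneg y) (dens_pos y).le)]
      have key : ‖y‖ ≤ Real.exp (1 + ‖y‖ ^ 2 / 4) := by
        have h1 : ‖y‖ ≤ 1 + ‖y‖ ^ 2 / 4 := by nlinarith [sq_nonneg (‖y‖ - 2)]
        have h2 : 1 + ‖y‖ ^ 2 / 4 ≤ Real.exp (1 + ‖y‖ ^ 2 / 4) := by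
          nlinarith [Real.add_one_le_exp (1 + ‖y‖ ^ 2 / 4)]
        linarith
      calc ‖y‖ * dens n y
          ≤ Real.exp (1 + ‖y‖ ^ 2 / 4) * dens n y :=
            mul_le_mul_of_nonneg_right key (dens_pos y).le
        _ = (2 * Real.pi) ^ (-(n : ℝ) / 2)
            * (Real.exp (1 + ‖y‖ ^ 2 / 4) * Real.exp (-‖y‖ ^ 2 / 2)) := by
            unfold dens; ring
        _ = (2 * Real.pi) ^ (-(n : ℝ) / 2)
            * Real.exp (1 + ‖y‖ ^ 2 / 4 + -‖y‖ ^ 2 / 2) := by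
            rw [← Real.exp_add]
        _ = (2 * Real.pi) ^ (-(n : ℝ) / 2)
            * (Real.exp 1 * Real.exp (-(1/4 : ℝ) * ‖y‖ ^ 2)) := by
            rw [← Real.exp_add]; congr 1; ring
        _ = (2 * Real.pi) ^ (-(n : ℝ) / 2) * Real.exp 1
            * Real.exp (-(1/4 : ℝ) * ‖y‖ ^ 2) := by ring
  refine hmain.congr ?_
  filter_upwards with y
  rw [ENNReal.toReal_ofReal (by positivity : (0:ℝ) ≤ (2 * Real.pi) ^ (-(n : ℝ) / 2) * Real.exp (-‖y‖ ^ 2 / 2))]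
  rfl

lemma integrable_lipschitz {n : ℕ} (f : EuclideanSpace ℝ (Fin n) → ℝ)
    (hf : ContDiff ℝ 1 f) (C : ℝ) (hf' : ∀ y, ‖fderiv ℝ f y‖ ≤ C)
    (w : EuclideanSpace ℝ (Fin n)) (s : ℝ) :
    Integrable (fun y => f (w + s • y)) (stdGaussian n) := by
  have hC : 0 ≤ C := le_trans (norm_nonneg _) (hf' 0)
  have hdiff : ∀ z ∈ (Set.univ : Set (EuclideanSpace ℝ (Fin n))),
      DifferentiableAt ℝ f z := fun z _ => hf.differentiable one_ne_zero z
  have lip : ∀ z : EuclideanSpace ℝ (Fin n), ‖f z - f w‖ ≤ C * ‖z - w‖ := fun z =>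
    (convex_univ).norm_image_sub_le_of_norm_fderiv_le hdiff
      (fun z _ => hf' z) (Set.mem_univ w) (Set.mem_univ z)
  apply Integrable.mono' (((integrable_norm_gauss n).const_mul (C * |s|)).add
    (integrable_const |f w|))
  · exact ((hf.continuous).comp (by fun_prop)).aestronglyMeasurable
  · filter_upwards with y
    have := lip (w + s • y)
    rw [Real.norm_eq_abs]
    have hn : ‖w + s • y - w‖ = |s| * ‖y‖ := by
      rw [add_sub_cancel_left, norm_smul, Real.norm_eq_abs]
    rw [hn] at this
    have : |f (w + s • y)| ≤ C * (|s| * ‖y‖) + |f w| := by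
      have h1 : |f (w + s • y)| - |f w| ≤ |f (w + s • y) - f w| := abs_sub_abs_le_abs_sub _ _
      have h2 : |f (w + s • y) - f w| ≤ C * (|s| * ‖y‖) := this
      linarith
    calc |f (w + s • y)| ≤ C * (|s| * ‖y‖) + |f w| := this
      _ = C * |s| * ‖y‖ + |f w| := by ring

lemma integrable_bounded {n : ℕ} (φ : EuclideanSpace ℝ (Fin n) → ℝ) (hc : Continuous φ)
    (c : ℝ) (hb : ∀ y, |φ y| ≤ c) : Integrable φ (stdGaussian n) :=
  ⟨hc.aestronglyMeasurable, HasFiniteIntegral.of_bounded (C := c)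
    (by filter_upwards with y; simpa using hb y)⟩

end Stmt6Aux

open Stmt6Aux

set_option maxHeartbeats 2000000 in
/-- Proposition 3.3 of the paper in the finite-dimensional Gaussian setting: if `f` is
continuously differentiable with bounded derivative, then for all `t > 0` and `x, h ∈ E`,
`|T_t f(x+h) − T_t f(x)| ≤ ‖h‖ exp(‖h‖²/(4t)) (T_t ‖∇f‖(x+h) + T_t ‖∇f‖(x))`. -/
theorem stmt_6 (n : ℕ) (f : EuclideanSpace ℝ (Fin n) → ℝ)
    (hf : ContDiff ℝ 1 f) (C : ℝ) (hf' : ∀ y, ‖fderiv ℝ f y‖ ≤ C)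
    (t : ℝ) (ht : 0 < t) (x h : EuclideanSpace ℝ (Fin n)) :
    |mehler n t f (x + h) - mehler n t f x|
      ≤ ‖h‖ * Real.exp (‖h‖ ^ 2 / (4 * t))
        * (mehler n t (fun y => ‖gradient f y‖) (x + h)
            + mehler n t (fun y => ‖gradient f y‖) x) := by
  have hC : 0 ≤ C := le_trans (norm_nonneg _) (hf' 0)
  have hgc : Continuous fun y : EuclideanSpace ℝ (Fin n) => ‖fderiv ℝ f y‖ :=
    (hf.continuous_fderiv one_ne_zero).norm
  simp only [mehler, norm_gradient_eq]
  set A := Real.exp (-t) with hA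
  have hA0 : 0 < A := Real.exp_pos _
  have hA1 : A ≤ 1 := by
    rw [hA, ← Real.exp_zero]
    exact Real.exp_le_exp.mpr (by linarith)
  have hft : 0 < 1 - Real.exp (-2 * t) := by
    have : Real.exp (-2 * t) < 1 := by
      rw [← Real.exp_zero]
      exact Real.exp_lt_exp.mpr (by linarith)
    linarith
  set s := Real.sqrt (1 - Real.exp (-2 * t)) with hs
  have hs0 : 0 < s := Real.sqrt_pos.mpr hft
  have hs2 : s ^ 2 = 1 - Real.exp (-2 * t) := Real.sq_sqrt hft.le
  set v : EuclideanSpace ℝ (Fin n) := A • h with hv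
  set a : EuclideanSpace ℝ (Fin n) := (A / s) • h with ha
  have hsa : s • a = v := by
    rw [ha, hv, smul_smul]
    congr 1
    field_simp
  have hxh : A • (x + h) = A • x + v := by rw [hv, smul_add]
  rw [hxh]
  have hvec : ∀ (u : ℝ) (y : EuclideanSpace ℝ (Fin n)),
      A • x + s • (y + u • a) = A • x + u • v + s • y := by
    intro u y
    rw [smul_add, smul_comm s u a, hsa]
    abel
  have hvec1 : ∀ y : EuclideanSpace ℝ (Fin n),
      A • x + s • (y + a) = A • x + v + s • y := by
    intro y
    have := hvec 1 y
    simpa using this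
  set K := Real.exp (‖a‖ ^ 2 / 2) with hK
  set T1 := ∫ y, ‖fderiv ℝ f (A • x + v + s • y)‖ ∂(stdGaussian n) with hT1
  set T0 := ∫ y, ‖fderiv ℝ f (A • x + s • y)‖ ∂(stdGaussian n) with hT0
  have hT1n : 0 ≤ T1 := integral_nonneg fun y => norm_nonneg _
  have hT0n : 0 ≤ T0 := integral_nonneg fun y => norm_nonneg _
  -- Step A: the shifted semigroup bound
  have stepA : ∀ u : ℝ, 0 ≤ u → u ≤ 1 →
      ∫ y, ‖fderiv ℝ f (A • x + u • v + s • y)‖ ∂(stdGaussian n) ≤ K * (T1 + T0) := by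
    intro u hu0 hu1
    have hφc : Continuous fun z : EuclideanSpace ℝ (Fin n) =>
        ‖fderiv ℝ f (A • x + s • z)‖ := hgc.comp (by fun_prop)
    have h2 := shift_le (fun z => ‖fderiv ℝ f (A • x + s • z)‖) hφc
      (fun z => norm_nonneg _) C (fun z => hf' _) a u hu0 hu1
    have e1 : (∫ y, ‖fderiv ℝ f (A • x + u • v + s • y)‖ ∂(stdGaussian n))
        = ∫ y, (fun z => ‖fderiv ℝ f (A • x + s • z)‖) (y + u • a) ∂(stdGaussian n) := by
      congr 1
      funext y
      simp only
      rw [hvec u y]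
    have e2 : (∫ y, (fun z => ‖fderiv ℝ f (A • x + s • z)‖) (y + a) ∂(stdGaussian n))
        = T1 := by
      rw [hT1]
      congr 1
      funext y
      simp only
      rw [hvec1 y]
    rw [e1]
    refine h2.trans (le_of_eq ?_)
    rw [e2, hT0, hK]
  -- Step B: pointwise FTC bound
  have hFTC : ∀ b : EuclideanSpace ℝ (Fin n),
      |f (b + v) - f b| ≤ ∫ u in Set.Ioc (0:ℝ) 1, ‖v‖ * ‖fderiv ℝ f (b + u • v)‖ := by
    intro b
    have hderiv : ∀ u ∈ Set.uIcc (0:ℝ) 1,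
        HasDerivAt (fun u : ℝ => f (b + u • v)) ((fderiv ℝ f (b + u • v)) v) u := by
      intro u _
      have h1 : HasFDerivAt f (fderiv ℝ f (b + u • v)) (b + u • v) :=
        (hf.differentiable one_ne_zero _).hasFDerivAt
      have h2 : HasDerivAt (fun u : ℝ => b + u • v) v u := by
        simpa using ((hasDerivAt_id u).smul_const v).const_add b
      exact h1.comp_hasDerivAt u h2
    have hcont : Continuous fun u : ℝ => (fderiv ℝ f (b + u • v)) v :=
      ((hf.continuous_fderiv one_ne_zero).comp (by fun_prop)).clm_apply continuous_const
    have heq : f (b + v) - f b = ∫ u in (0:ℝ)..1, (fderiv ℝ f (b + u • v)) v := by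
      rw [intervalIntegral.integral_eq_sub_of_hasDerivAt hderiv (hcont.intervalIntegrable 0 1)]
      simp
    rw [heq, intervalIntegral.integral_of_le zero_le_one]
    have habs : |∫ u in Set.Ioc (0:ℝ) 1, (fderiv ℝ f (b + u • v)) v|
        ≤ ∫ u in Set.Ioc (0:ℝ) 1, |(fderiv ℝ f (b + u • v)) v| := by
      simpa [Real.norm_eq_abs] using
        norm_integral_le_integral_norm (μ := volume.restrict (Set.Ioc (0:ℝ) 1))
          (fun u : ℝ => (fderiv ℝ f (b + u • v)) v)
    refine habs.trans ?_
    apply integral_mono_of_nonneg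
    · filter_upwards with u
      exact abs_nonneg _
    · have : Continuous fun u : ℝ => ‖v‖ * ‖fderiv ℝ f (b + u • v)‖ :=
        continuous_const.mul (hgc.comp (by fun_prop))
      exact this.integrableOn_Ioc
    · filter_upwards with u
      calc |(fderiv ℝ f (b + u • v)) v| ≤ ‖fderiv ℝ f (b + u • v)‖ * ‖v‖ :=
            (fderiv ℝ f (b + u • v)).le_opNorm v
        _ = ‖v‖ * ‖fderiv ℝ f (b + u • v)‖ := mul_comm _ _
  -- Step C: product integrability and Fubini
  set μ1 : Measure ℝ := volume.restrict (Set.Ioc (0:ℝ) 1) with hμ1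
  haveI : IsFiniteMeasure μ1 := by
    constructor
    rw [hμ1, Measure.restrict_apply_univ, Real.volume_Ioc]
    exact ENNReal.ofReal_lt_top
  set F : EuclideanSpace ℝ (Fin n) × ℝ → ℝ :=
    fun p => ‖v‖ * ‖fderiv ℝ f (A • x + s • p.1 + p.2 • v)‖ with hF
  have hFc : Continuous F := continuous_const.mul (hgc.comp (by fun_prop))
  have hFint : Integrable F ((stdGaussian n).prod μ1) := by
    refine ⟨hFc.aestronglyMeasurable, HasFiniteIntegral.of_bounded (C := ‖v‖ * C) ?_⟩
    filter_upwards with p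
    rw [hF]
    simp only [Real.norm_eq_abs]
    rw [abs_of_nonneg (mul_nonneg (norm_nonneg v) (norm_nonneg _))]
    exact mul_le_mul_of_nonneg_left (hf' _) (norm_nonneg v)
  -- integrability of the two mehler integrands
  have Int1 : Integrable (fun y => f (A • x + v + s • y)) (stdGaussian n) :=
    integrable_lipschitz f hf C hf' (A • x + v) s
  have Int0 : Integrable (fun y => f (A • x + s • y)) (stdGaussian n) :=
    integrable_lipschitz f hf C hf' (A • x) s
  have hsub : (∫ y, f (A • x + v + s • y) ∂(stdGaussian n))
        - (∫ y, f (A • x + s • y) ∂(stdGaussian n))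
      = ∫ y, (f (A • x + v + s • y) - f (A • x + s • y)) ∂(stdGaussian n) :=
    (integral_sub Int1 Int0).symm
  rw [hsub]
  have habs2 : |∫ y, (f (A • x + v + s • y) - f (A • x + s • y)) ∂(stdGaussian n)|
      ≤ ∫ y, |f (A • x + v + s • y) - f (A • x + s • y)| ∂(stdGaussian n) := by
    simpa [Real.norm_eq_abs] using
      norm_integral_le_integral_norm (μ := stdGaussian n)
        (fun y => f (A • x + v + s • y) - f (A • x + s • y))
  have hIb : Integrable (fun y => ∫ u, F (y, u) ∂μ1) (stdGaussian n) :=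
    hFint.integral_prod_left
  have step2 : (∫ y, |f (A • x + v + s • y) - f (A • x + s • y)| ∂(stdGaussian n))
      ≤ ∫ y, (∫ u, F (y, u) ∂μ1) ∂(stdGaussian n) := by
    apply integral_mono_of_nonneg
    · filter_upwards with y
      exact abs_nonneg _
    · exact hIb
    · filter_upwards with y
      have hb := hFTC (A • x + s • y)
      have e : A • x + s • y + v = A • x + v + s • y := by abel
      rw [e] at hb
      refine hb.trans (le_of_eq ?_)
      rfl
  have step3 : (∫ y, (∫ u, F (y, u) ∂μ1) ∂(stdGaussian n))
      = ∫ u, (∫ y, F (y, u) ∂(stdGaussian n)) ∂μ1 :=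
    integral_integral_swap (f := fun y u => F (y, u)) hFint
  have step4 : (∫ u, (∫ y, F (y, u) ∂(stdGaussian n)) ∂μ1)
      ≤ ∫ _u, ‖v‖ * (K * (T1 + T0)) ∂μ1 := by
    apply integral_mono_of_nonneg
    · filter_upwards with u
      exact integral_nonneg fun y => mul_nonneg (norm_nonneg v) (norm_nonneg _)
    · exact integrable_const _
    · rw [hμ1]
      filter_upwards [ae_restrict_mem measurableSet_Ioc] with u hu
      have hmul : (∫ y, F (y, u) ∂(stdGaussian n))
          = ‖v‖ * ∫ y, ‖fderiv ℝ f (A • x + u • v + s • y)‖ ∂(stdGaussian n) := by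
        rw [hF]
        simp only
        rw [integral_const_mul]
        simp only [show ∀ y : EuclideanSpace ℝ (Fin n),
          A • x + s • y + u • v = A • x + u • v + s • y from fun y => by abel]
      rw [hmul]
      exact mul_le_mul_of_nonneg_left (stepA u hu.1.le hu.2) (norm_nonneg v)
  have step5 : (∫ _u, ‖v‖ * (K * (T1 + T0)) ∂μ1) = ‖v‖ * (K * (T1 + T0)) := by
    rw [integral_const, hμ1, Measure.real, Measure.restrict_apply_univ, Real.volume_Ioc]
    norm_num
  -- scalar estimate
  have hscal : ‖v‖ * K ≤ ‖h‖ * Real.exp (‖h‖ ^ 2 / (4 * t)) := by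
    have hnv : ‖v‖ = A * ‖h‖ := by
      rw [hv, norm_smul, Real.norm_eq_abs, abs_of_pos hA0]
    have hna : ‖a‖ ^ 2 = (A / s) ^ 2 * ‖h‖ ^ 2 := by
      rw [ha, norm_smul, Real.norm_eq_abs, mul_pow, sq_abs]
    have eA2 : A ^ 2 = Real.exp (-2 * t) := by
      rw [hA, sq, ← Real.exp_add]
      congr 1
      ring
    have e2 : Real.exp (2 * t) * Real.exp (-2 * t) = 1 := by
      rw [← Real.exp_add]
      norm_num
    have e3 : 1 + 2 * t ≤ Real.exp (2 * t) := by
      have := Real.add_one_le_exp (2 * t)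
      linarith
    have h4 : (1 + 2 * t) * A ^ 2 ≤ 1 := by
      rw [eA2]
      nlinarith [Real.exp_pos (-2 * t)]
    have hdiv : A ^ 2 / s ^ 2 ≤ 1 / (2 * t) := by
      rw [div_le_div_iff₀ (by positivity) (by linarith)]
      rw [hs2, ← eA2]
      nlinarith
    have hkey : ‖a‖ ^ 2 / 2 ≤ ‖h‖ ^ 2 / (4 * t) := by
      rw [hna, div_pow]
      have h5 : A ^ 2 / s ^ 2 * ‖h‖ ^ 2 ≤ 1 / (2 * t) * ‖h‖ ^ 2 :=
        mul_le_mul_of_nonneg_right hdiv (sq_nonneg _)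
      calc A ^ 2 / s ^ 2 * ‖h‖ ^ 2 / 2 ≤ 1 / (2 * t) * ‖h‖ ^ 2 / 2 := by linarith
        _ = ‖h‖ ^ 2 / (4 * t) := by ring
    have hKle : K ≤ Real.exp (‖h‖ ^ 2 / (4 * t)) := by
      rw [hK]
      exact Real.exp_le_exp.mpr hkey
    rw [hnv]
    calc A * ‖h‖ * K ≤ 1 * ‖h‖ * Real.exp (‖h‖ ^ 2 / (4 * t)) := by
          have hK0 : 0 < K := Real.exp_pos _
          have := mul_le_mul hA1 hKle hK0.le (by norm_num)
          nlinarith [norm_nonneg h, Real.exp_pos (‖h‖ ^ 2 / (4 * t))]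
      _ = ‖h‖ * Real.exp (‖h‖ ^ 2 / (4 * t)) := by ring
  calc |∫ y, (f (A • x + v + s • y) - f (A • x + s • y)) ∂(stdGaussian n)|
      ≤ ∫ y, |f (A • x + v + s • y) - f (A • x + s • y)| ∂(stdGaussian n) := habs2
    _ ≤ ∫ y, (∫ u, F (y, u) ∂μ1) ∂(stdGaussian n) := step2
    _ = ∫ u, (∫ y, F (y, u) ∂(stdGaussian n)) ∂μ1 := step3
    _ ≤ ∫ _u, ‖v‖ * (K * (T1 + T0)) ∂μ1 := step4
    _ = ‖v‖ * (K * (T1 + T0)) := step5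
    _ = (‖v‖ * K) * (T1 + T0) := by ring
    _ ≤ (‖h‖ * Real.exp (‖h‖ ^ 2 / (4 * t))) * (T1 + T0) :=
        mul_le_mul_of_nonneg_right hscal (by linarith)
    _ = ‖h‖ * Real.exp (‖h‖ ^ 2 / (4 * t)) * (T1 + T0) := by ring
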